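/- For all real y with 0 ≤ y < 1, the inequality y + (1−y)·ln(1−y) ≤ (1 + y·(1−ln 2)/ln 2)·ln(1 + y²) holds. -/

import Mathlib

/-- Padé-type bound: for `0 < u ≤ 1`, `2(1-u)/(1+u) ≤ -log u`. -/
lemma pade_log_bound (u : ℝ) (hu0 : 0 < u) (hu1 : u ≤ 1) :
    2 * (1 - u) / (1 + u) ≤ -Real.log u := by
  set f : ℝ → ℝ := fun x => -Real.log x - 2 * (1 - x) / (1 + x) with hf
  have key : AntitoneOn f (Set.Icc u 1) := by
    have hderiv : ∀ x ∈ Set.Ioo u 1, HasDerivAt f (-(1/x) + 4 / (1+x)^2) x := by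
      intro x hx
      have hx0 : 0 < x := lt_trans hu0 hx.1
      have hx1 : (1:ℝ) + x ≠ 0 := by nlinarith [hx.1]
      have h1 : HasDerivAt (fun x : ℝ => -Real.log x) (-(1/x)) x :=
        ((Real.hasDerivAt_log (ne_of_gt hx0)).neg).congr_deriv (by ring)
      have h2 : HasDerivAt (fun x : ℝ => 2 * (1 - x) / (1 + x))
          ((2 * -1 * (1 + x) - 2 * (1 - x) * 1) / (1 + x) ^ 2) x :=
        (((hasDerivAt_id x).const_sub 1).const_mul 2).div
          ((hasDerivAt_id x).const_add 1) hx1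
      have h2' : HasDerivAt (fun x : ℝ => 2 * (1 - x) / (1 + x)) (-4 / (1+x)^2) x := by
        convert h2 using 1; field_simp; ring
      have := h1.sub h2'
      exact this.congr_deriv (by ring)
    apply antitoneOn_of_deriv_nonpos (convex_Icc u 1)
    · apply ContinuousOn.sub
      · exact (Real.continuousOn_log.mono (by
          intro x hx; simp only [Set.mem_compl_iff, Set.mem_singleton_iff]
          exact ne_of_gt (lt_of_lt_of_le hu0 hx.1))).neg
      · apply ContinuousOn.div
        · exact continuousOn_const.mul (continuousOn_const.sub continuousOn_id)
        · exact continuousOn_const.add continuousOn_id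
        · intro x hx; nlinarith [lt_of_lt_of_le hu0 hx.1]
    · intro x hx
      rw [interior_Icc] at hx
      exact ((hderiv x hx).differentiableAt).differentiableWithinAt
    · intro x hx
      rw [interior_Icc] at hx
      rw [(hderiv x hx).deriv]
      have hx0 : 0 < x := lt_trans hu0 hx.1
      have h1x : 0 < (1+x)^2 := by positivity
      have he : -(1/x) + 4/(1+x)^2 = -((1-x)^2 / (x * (1+x)^2)) := by
        field_simp; ring
      rw [he, neg_nonpos]
      positivity
  rcases eq_or_lt_of_le hu1 with h | h
  · subst h; simp
  · have := key (Set.left_mem_Icc.mpr hu1) (Set.right_mem_Icc.mpr hu1) hu1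
    have hf1 : f 1 = 0 := by simp [hf]
    have hfu : f u = -Real.log u - 2 * (1-u)/(1+u) := rfl
    rw [hf1, hfu] at this
    linarith

/-- `log 2 * t ≤ log (1 + t)` for `t ∈ [0,1]`. -/
lemma log_one_add_ge (t : ℝ) (ht0 : 0 ≤ t) (ht1 : t ≤ 1) :
    Real.log 2 * t ≤ Real.log (1 + t) := by
  have hconv := convexOn_exp.2 (Set.mem_univ (0:ℝ)) (Set.mem_univ (Real.log 2))
    (by linarith : (0:ℝ) ≤ 1 - t) ht0 (by ring)
  simp only [smul_eq_mul, mul_zero, zero_add, Real.exp_zero,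
    Real.exp_log (by norm_num : (0:ℝ) < 2)] at hconv
  have h2 : Real.exp (t * Real.log 2) ≤ 1 + t := by
    calc Real.exp (t * Real.log 2) ≤ (1-t)*1 + t*2 := hconv
    _ = 1 + t := by ring
  have := Real.log_le_log (Real.exp_pos _) h2
  rwa [Real.log_exp, mul_comm] at this

theorem key_rate_inequality (y : ℝ) (hy0 : 0 ≤ y) (hy1 : y < 1) :
    y + (1 - y) * Real.log (1 - y)
      ≤ (1 + y * (1 - Real.log 2) / Real.log 2) * Real.log (1 + y ^ 2) := by
  have hL : (0.6931:ℝ) < Real.log 2 := by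
    have := Real.log_two_gt_d9; linarith
  have hL2 : Real.log 2 < 0.6932 := by
    have := Real.log_two_lt_d9; linarith
  set L := Real.log 2
  have hLpos : 0 < L := by linarith
  have hu0 : 0 < 1 - y := by linarith
  -- Step 1: LHS ≤ y^2/(2-y)
  have hpade := pade_log_bound (1-y) hu0 (by linarith)
  have h2y : 0 < 2 - y := by linarith
  have step1 : y + (1 - y) * Real.log (1 - y) ≤ y^2 / (2 - y) := by
    have h1 : Real.log (1-y) ≤ -(2*y/(2-y)) := by
      have : 2 * (1 - (1-y)) / (1 + (1-y)) = 2*y/(2-y) := by ring_nf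
      linarith [hpade, this ▸ hpade]
    have h2 : (1-y) * Real.log (1-y) ≤ (1-y) * (-(2*y/(2-y))) :=
      mul_le_mul_of_nonneg_left h1 (le_of_lt hu0)
    have h3 : y + (1-y) * (-(2*y/(2-y))) = y^2/(2-y) := by
      field_simp; ring
    linarith
  -- Step 2: y^2/(2-y) ≤ y^2*L + y^3*(1-L)
  have step2 : y^2 / (2 - y) ≤ y^2 * L + y^3 * (1 - L) := by
    rw [div_le_iff₀ h2y]
    nlinarith [sq_nonneg y, mul_nonneg (mul_nonneg (sq_nonneg y) hu0.le)
      (by nlinarith : (0:ℝ) ≤ (1-L)*y + 2*L - 1)]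
  -- Step 3: y^2*L + y^3*(1-L) ≤ RHS
  have hlog : L * y^2 ≤ Real.log (1 + y^2) :=
    log_one_add_ge (y^2) (sq_nonneg y) (by nlinarith)
  have hcoef : 0 ≤ 1 + y * (1 - L) / L := by
    have : 0 ≤ y * (1 - L) / L := by
      apply div_nonneg _ hLpos.le
      apply mul_nonneg hy0; linarith
    linarith
  have step3 : y^2 * L + y^3 * (1-L) ≤ (1 + y * (1-L)/L) * Real.log (1 + y^2) := by
    have h1 : (1 + y * (1-L)/L) * (L * y^2) ≤ (1 + y * (1-L)/L) * Real.log (1 + y^2) :=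
      mul_le_mul_of_nonneg_left hlog hcoef
    have h2 : (1 + y * (1-L)/L) * (L * y^2) = y^2 * L + y^3 * (1-L) := by
      field_simp
    linarith
  linarith
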